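/- Let F : F_{2^n} → F_{2^n} and suppose no permutation of the form F(x) + L(x) exists for any non-zero F_2-linear map L. Then every permutation of F_{2^n} that is EA-equivalent to F is already affine equivalent to F. -/

import Mathlib

noncomputable section

abbrev K (n : ℕ) := GaloisField 2 n

noncomputable instance (n : ℕ) : Fintype (K n) := Fintype.ofFinite _

/-- The absolute trace of `F_{2^n}` to `F_2`. -/
def tr (n : ℕ) : K n →ₗ[ZMod 2] ZMod 2 := Algebra.trace (ZMod 2) (K n)

/-- The additive character `x ↦ (-1)^{Tr(x)}`. -/
def chi (n : ℕ) (x : K n) : ℤ := (-1) ^ (tr n x).val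

/-- The Kloosterman sum. -/
def Kl (n : ℕ) (a : K n) : ℤ := ∑ x : K n, chi n (x⁻¹ + a * x)

/-- The Walsh transform of `F`. -/
def W (n : ℕ) (F : K n → K n) (a b : K n) : ℤ := ∑ x : K n, chi n (a * F x + b * x)

/-- The quadratic form `Q(x) = ∑_{0 ≤ i < j < n} x^{2^i + 2^j}`. -/
def Qf (n : ℕ) (x : K n) : K n := ∑ i ∈ Finset.range n, ∑ j ∈ Finset.Ioo i n, x ^ (2^i + 2^j)

/-- `A` is an affine map, i.e. a linear map plus a constant. -/
def IsAffineMap {n : ℕ} (A : K n → K n) : Prop :=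
  ∃ (L : K n →ₗ[ZMod 2] K n) (c : K n), ∀ x, A x = L x + c

/-- `F` and `G` are EA-equivalent: `A1(F(A2 x)) + A3 x = G x` with `A1, A2` affine
permutations and `A3` affine. -/
def EAEquiv {n : ℕ} (F G : K n → K n) : Prop :=
  ∃ A1 A2 A3 : K n → K n,
    IsAffineMap A1 ∧ IsAffineMap A2 ∧ IsAffineMap A3 ∧
    Function.Bijective A1 ∧ Function.Bijective A2 ∧
    ∀ x, A1 (F (A2 x)) + A3 x = G x

/-- `F` and `G` are affine equivalent: the case `A3 = 0` of EA-equivalence. -/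
def AffEquiv {n : ℕ} (F G : K n → K n) : Prop :=
  ∃ A1 A2 : K n → K n,
    IsAffineMap A1 ∧ IsAffineMap A2 ∧
    Function.Bijective A1 ∧ Function.Bijective A2 ∧
    ∀ x, A1 (F (A2 x)) = G x

theorem stmt0 {n : ℕ} (F : K n → K n)
    (hF : ∀ L : K n →ₗ[ZMod 2] K n, L ≠ 0 →
      ¬ Function.Bijective (fun x => F x + L x)) :
    ∀ G : K n → K n, Function.Bijective G → EAEquiv F G → AffEquiv F G := by
  rintro G hG ⟨A1, A2, A3, ⟨L1, c1, h1⟩, ⟨L2, c2, h2⟩, ⟨L3, c3, h3⟩, hA1, hA2, heq⟩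
  have hL1 : Function.Bijective L1 := by
    have hfe : ⇑L1 = (fun y => y - c1) ∘ A1 := funext fun x => by simp [h1]
    rw [hfe]; exact (Equiv.subRight c1).bijective.comp hA1
  have hL2 : Function.Bijective L2 := by
    have hfe : ⇑L2 = (fun y => y - c2) ∘ A2 := funext fun x => by simp [h2]
    rw [hfe]; exact (Equiv.subRight c2).bijective.comp hA2
  set e1 := LinearEquiv.ofBijective L1 hL1 with he1
  set e2 := LinearEquiv.ofBijective L2 hL2 with he2
  set L : K n →ₗ[ZMod 2] K n :=
    e1.symm.toLinearMap.comp (L3.comp e2.symm.toLinearMap) with hLdef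
  set d : K n := - c1 - c3 + L3 (e2.symm c2) with hd
  have key : Function.Bijective (fun y => F y + L y) := by
    have hfe : (fun y => F y + L y) =
        (fun z => e1.symm (z + d)) ∘ G ∘ (fun y => e2.symm (y - c2)) := by
      funext y
      set x := e2.symm (y - c2) with hx
      have hA2x : A2 x = y := by
        rw [h2]
        have : L2 x = y - c2 := e2.apply_symm_apply (y - c2)
        rw [this]; ring
      have hGx : G x = L1 (F y) + c1 + (L3 x + c3) := by
        rw [← heq x, hA2x, h1, h3]
      have hsum : x + e2.symm c2 = e2.symm y := by
        rw [hx, ← map_add]; congr 1; ring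
      simp only [Function.comp_apply, hGx, hd]
      rw [← hx, hGx]
      have step : L1 (F y) + c1 + (L3 x + c3) + (-c1 - c3 + L3 (e2.symm c2))
          = L1 (F y) + L3 (e2.symm y) := by
        rw [← hsum, map_add]; ring
      rw [step, map_add]
      have h1' : e1.symm (L1 (F y)) = F y := e1.symm_apply_apply (F y)
      rw [h1']
      congr 1
    rw [hfe]
    have b1 : Function.Bijective (fun y : K n => e2.symm (y - c2)) :=
      e2.symm.bijective.comp (Equiv.subRight c2).bijective
    have b2 : Function.Bijective (fun z : K n => e1.symm (z + d)) :=
      e1.symm.bijective.comp (Equiv.addRight d).bijective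
    exact (b2.comp hG).comp b1
  have hL3 : L3 = 0 := by
    by_contra h30
    have hL0 : L ≠ 0 := by
      intro h0
      apply h30
      ext z
      have h0' := congrArg (fun f => (f : K n →ₗ[ZMod 2] K n) (e2 z)) h0
      simp only [hLdef, LinearMap.comp_apply, LinearMap.zero_apply,
        LinearEquiv.coe_coe, e2.symm_apply_apply] at h0'
      have h0'' := congrArg e1 h0'
      simpa using h0''
    exact hF L hL0 key
  refine ⟨fun x => A1 x + c3, A2, ⟨L1, c1 + c3, fun x => by show A1 x + c3 = _; rw [h1]; ring⟩,
    ⟨L2, c2, h2⟩, ?_, hA2, fun x => ?_⟩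
  · exact (Equiv.addRight c3).bijective.comp hA1
  · show A1 (F (A2 x)) + c3 = G x
    rw [← heq x, h3, hL3]; simp
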